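/- Let A and B be unital C*-algebras, E a Hilbert A-module and F a Hilbert B-module. If {u_i}_{i∈I} is an orthonormal basis for E and {v_j}_{j∈J} is an orthonormal basis for F, then {u_i ⊗ v_j}_{i∈I, j∈J} is an orthonormal basis for the exterior tensor product E⊗F (a Hilbert A⊗B-module). -/

import Mathlib

/-- The right-module version of `CStarModule` from the older Mathlib (Dec 2024): a right
`A`-module (via `Aᵐᵒᵖ`), with inner product linear in the second variable. -/
class CStarModuleRight (A E : Type*) [NonUnitalSemiring A] [StarRing A] [Module ℂ A]
    [AddCommGroup E] [Module ℂ E] [PartialOrder A] [SMul Aᵐᵒᵖ E] [Norm A] [Norm E]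
    extends Inner A E where
  inner_add_right {x} {y} {z} : inner x (y + z) = inner x y + inner x z
  inner_self_nonneg {x} : 0 ≤ inner x x
  inner_self {x} : inner x x = 0 ↔ x = 0
  inner_op_smul_right {a : A} {x y : E} : inner x (MulOpposite.op a • y) = inner x y * a
  inner_smul_right_complex {z : ℂ} {x} {y} : inner x (z • y) = z • inner x y
  star_inner x y : star (inner x y) = inner y x
  norm_eq_sqrt_norm_inner_self x : ‖x‖ = √‖inner x x‖

set_option maxHeartbeats 1000000 in
/-- If `{u i}` is an orthonormal basis for the Hilbert `A`-module `E` and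
`{v j}` is an orthonormal basis for the Hilbert `B`-module `F`, then `{u i ⊗ v j}` is an
orthonormal basis for the exterior tensor product `E ⊗ F` (a Hilbert module over the
spatial tensor product `A ⊗ B`).  A vector `x` is basic if `⟪x, x⟫` is a minimal
projection; an orthonormal basis is a pairwise-orthogonal family of basic vectors
generating a dense submodule. -/
theorem cstar_module_tensor_product_orthonormal_basis
    {A B C : Type*}
    [CStarAlgebra A] [PartialOrder A] [StarOrderedRing A]
    [CStarAlgebra B] [PartialOrder B] [StarOrderedRing B]
    [CStarAlgebra C] [PartialOrder C] [StarOrderedRing C]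
    -- the spatial tensor product `C = A ⊗ B`
    (m : A →ₗ[ℂ] B →ₗ[ℂ] C)
    (hm_mul : ∀ (a a' : A) (b b' : B), m (a * a') (b * b') = m a b * m a' b')
    (hm_star : ∀ (a : A) (b : B), star (m a b) = m (star a) (star b))
    (hm_one : m 1 1 = 1)
    (hm_norm : ∀ (a : A) (b : B), ‖m a b‖ = ‖a‖ * ‖b‖)
    (hm_dense : Dense (Submodule.span ℂ {c : C | ∃ a b, m a b = c} : Set C))
    -- the Hilbert modules `E`, `F` and `T = E ⊗ F`
    {E F T : Type*}
    [NormedAddCommGroup E] [NormedSpace ℂ E] [Module Aᵐᵒᵖ E] [CStarModuleRight A E]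
      [CompleteSpace E]
    [NormedAddCommGroup F] [NormedSpace ℂ F] [Module Bᵐᵒᵖ F] [CStarModuleRight B F]
      [CompleteSpace F]
    [NormedAddCommGroup T] [NormedSpace ℂ T] [Module Cᵐᵒᵖ T] [CStarModuleRight C T]
      [CompleteSpace T]
    (tm : E →ₗ[ℂ] F →ₗ[ℂ] T)
    (htm_inner : ∀ (x x' : E) (y y' : F),
      (inner C (tm x y) (tm x' y') : C) = m (inner A x x' : A) (inner B y y' : B))
    (htm_dense : Dense (Submodule.span ℂ {z : T | ∃ x y, tm x y = z} : Set T))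
    -- also: the module actions on the tensor product satisfy
    -- `(a ⊗ b) • (x ⊗ y) = (a • x) ⊗ (b • y)`
    (htm_smul : ∀ (a : A) (b : B) (x : E) (y : F),
      MulOpposite.op (m a b) • tm x y = tm (MulOpposite.op a • x) (MulOpposite.op b • y))
    -- the orthonormal bases
    {I J : Type*} (u : I → E) (v : J → F)
    -- each `u i` is basic, i.e. `⟪u i, u i⟫` is a minimal projection in `A`
    (hu_basic : ∀ i, IsIdempotentElem (inner A (u i) (u i) : A) ∧
      IsSelfAdjoint (inner A (u i) (u i) : A) ∧
      ∀ a : A, ∃ c : ℂ,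
        (inner A (u i) (u i) : A) * a * (inner A (u i) (u i) : A)
          = c • (inner A (u i) (u i) : A))
    (hu_orth : ∀ i i', i ≠ i' → (inner A (u i) (u i') : A) = 0)
    (hu_dense : Dense (Submodule.span Aᵐᵒᵖ (Set.range u) : Set E))
    (hv_basic : ∀ j, IsIdempotentElem (inner B (v j) (v j) : B) ∧
      IsSelfAdjoint (inner B (v j) (v j) : B) ∧
      ∀ b : B, ∃ c : ℂ,
        (inner B (v j) (v j) : B) * b * (inner B (v j) (v j) : B)
          = c • (inner B (v j) (v j) : B))
    (hv_orth : ∀ j j', j ≠ j' → (inner B (v j) (v j') : B) = 0)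
    (hv_dense : Dense (Submodule.span Bᵐᵒᵖ (Set.range v) : Set F)) :
    -- conclusion: `{u i ⊗ v j}` is an orthonormal basis for `E ⊗ F`
    (∀ p : I × J,
      IsIdempotentElem (inner C (tm (u p.1) (v p.2)) (tm (u p.1) (v p.2)) : C) ∧
      IsSelfAdjoint (inner C (tm (u p.1) (v p.2)) (tm (u p.1) (v p.2)) : C) ∧
      ∀ c : C, ∃ c' : ℂ,
        (inner C (tm (u p.1) (v p.2)) (tm (u p.1) (v p.2)) : C) * c *
            (inner C (tm (u p.1) (v p.2)) (tm (u p.1) (v p.2)) : C)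
          = c' • (inner C (tm (u p.1) (v p.2)) (tm (u p.1) (v p.2)) : C)) ∧
    (∀ p p' : I × J, p ≠ p' →
      (inner C (tm (u p.1) (v p.2)) (tm (u p'.1) (v p'.2)) : C) = 0) ∧
    Dense (Submodule.span Cᵐᵒᵖ
      (Set.range fun p : I × J => tm (u p.1) (v p.2)) : Set T) := by
  classical
  -- norm identity for tm
  have htm_norm : ∀ (x : E) (y : F), ‖tm x y‖ = ‖x‖ * ‖y‖ := by
    intro x y
    have h1 : ‖tm x y‖ ^ 2 = (‖x‖ * ‖y‖) ^ 2 := by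
      rw [CStarModuleRight.norm_eq_sqrt_norm_inner_self (A := C) (tm x y), htm_inner, hm_norm,
        Real.sqrt_mul (norm_nonneg _),
        ← CStarModuleRight.norm_eq_sqrt_norm_inner_self (A := A) x,
        ← CStarModuleRight.norm_eq_sqrt_norm_inner_self (A := B) y]
    have h2 : (0:ℝ) ≤ ‖tm x y‖ := norm_nonneg _
    have h3 : (0:ℝ) ≤ ‖x‖ * ‖y‖ := by positivity
    nlinarith [sq_nonneg (‖tm x y‖ - ‖x‖ * ‖y‖), sq_nonneg (‖tm x y‖ + ‖x‖ * ‖y‖)]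
  refine ⟨?_, ?_, ?_⟩
  · rintro ⟨i, j⟩
    obtain ⟨huI, huS, huM⟩ := hu_basic i
    obtain ⟨hvI, hvS, hvM⟩ := hv_basic j
    set eA : A := inner A (u i) (u i) with heA
    set eB : B := inner B (v j) (v j) with heB
    have he : (inner C (tm (u i) (v j)) (tm (u i) (v j)) : C) = m eA eB :=
      htm_inner _ _ _ _
    rw [he]
    set e : C := m eA eB with he'
    refine ⟨?_, ?_, ?_⟩
    · show e * e = e
      rw [he', ← hm_mul, huI, hvI]
    · show star e = e
      rw [he', hm_star, huS.star_eq, hvS.star_eq]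
    · -- minimality
      intro c
      have hspan_closed : IsClosed ((Submodule.span ℂ {e} : Submodule ℂ C) : Set C) :=
        (Submodule.span ℂ {e}).closed_of_finiteDimensional
      have hcont : Continuous (fun c : C => e * c * e) :=
        Continuous.mul (continuous_mul_left e) continuous_const
      set K : Submodule ℂ C :=
        (Submodule.span ℂ {e}).comap ((LinearMap.mulRight ℂ e).comp (LinearMap.mulLeft ℂ e))
        with hK
      have hKeq : (K : Set C) = (fun c : C => e * c * e) ⁻¹'
          ((Submodule.span ℂ {e} : Submodule ℂ C) : Set C) := by
        ext c
        simp [hK, Submodule.mem_comap]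
      have hKclosed : IsClosed (K : Set C) := by
        rw [hKeq]; exact hspan_closed.preimage hcont
      have hKgen : {c : C | ∃ a b, m a b = c} ⊆ (K : Set C) := by
        rintro _ ⟨a, b, rfl⟩
        obtain ⟨c₁, hc₁⟩ := huM a
        obtain ⟨c₂, hc₂⟩ := hvM b
        have key : e * m a b * e = (c₁ * c₂) • e := by
          rw [he', ← hm_mul, ← hm_mul, hc₁, hc₂]
          simp only [map_smul, LinearMap.smul_apply, smul_smul, mul_comm c₂ c₁]
        have : (fun c : C => e * c * e) (m a b) ∈
            ((Submodule.span ℂ {e} : Submodule ℂ C) : Set C) := by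
          simp only [key]
          exact Submodule.smul_mem _ _ (Submodule.mem_span_singleton_self e)
        rw [hKeq]
        exact this
      have hKtop : ∀ c : C, c ∈ K := by
        intro c
        have h1 : (Submodule.span ℂ {c : C | ∃ a b, m a b = c} : Set C) ⊆ (K : Set C) :=
          Submodule.span_le.mpr hKgen
        have h2 : closure ((Submodule.span ℂ {c : C | ∃ a b, m a b = c} :
            Submodule ℂ C) : Set C) ⊆ closure (K : Set C) := closure_mono h1
        rw [hm_dense.closure_eq, hKclosed.closure_eq] at h2
        exact h2 (Set.mem_univ c)
      have hc : e * c * e ∈ Submodule.span ℂ {e} := by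
        have h := hKtop c
        rw [← SetLike.mem_coe, hKeq] at h
        exact h
      obtain ⟨c', hc'⟩ := Submodule.mem_span_singleton.mp hc
      exact ⟨c', hc'.symm⟩
  · rintro ⟨i, j⟩ ⟨i', j'⟩ hne
    rw [htm_inner]
    rcases eq_or_ne i i' with rfl | hii
    · have hjj : j ≠ j' := by rintro rfl; exact hne rfl
      rw [hv_orth j j' hjj, map_zero]
    · rw [hu_orth i i' hii, map_zero, LinearMap.zero_apply]
  · -- density
    set S : Submodule Cᵐᵒᵖ T :=
      Submodule.span Cᵐᵒᵖ (Set.range fun p : I × J => tm (u p.1) (v p.2)) with hS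
    -- tm is jointly continuous
    have hb : ∀ x y, ‖tm x y‖ ≤ 1 * ‖x‖ * ‖y‖ := fun x y => by
      rw [htm_norm, one_mul]
    have hcont : Continuous (Function.uncurry fun x y => tm x y) :=
      (LinearMap.mkContinuous₂ tm 1 hb).isBoundedBilinearMap.continuous
    -- step 1: tm x y ∈ S for x in the span of u and y in the span of v
    have hstep : ∀ x ∈ Submodule.span Aᵐᵒᵖ (Set.range u),
        ∀ y ∈ Submodule.span Bᵐᵒᵖ (Set.range v), tm x y ∈ S := by
      intro x hx
      induction hx using Submodule.span_induction with
      | mem x hxmem =>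
        obtain ⟨i, rfl⟩ := hxmem
        intro y hy
        induction hy using Submodule.span_induction with
        | mem y hymem =>
          obtain ⟨j, rfl⟩ := hymem
          exact Submodule.subset_span ⟨(i, j), rfl⟩
        | zero => rw [map_zero]; exact Submodule.zero_mem S
        | add y z _ _ hy hz => rw [map_add]; exact Submodule.add_mem S hy hz
        | smul b y _ hy =>
          have h := htm_smul 1 b.unop (u i) y
          rw [MulOpposite.op_one, one_smul, MulOpposite.op_unop] at h
          rw [← h]
          exact Submodule.smul_mem S _ hy
      | zero =>
        intro y hy
        rw [map_zero, LinearMap.zero_apply]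
        exact Submodule.zero_mem S
      | add x z _ _ hx hz =>
        intro y hy
        rw [map_add, LinearMap.add_apply]
        exact Submodule.add_mem S (hx y hy) (hz y hy)
      | smul a x _ hx =>
        intro y hy
        have h := htm_smul a.unop 1 x y
        rw [MulOpposite.op_one, one_smul, MulOpposite.op_unop] at h
        rw [← h]
        exact Submodule.smul_mem S _ (hx y hy)
    -- step 2: tm x y ∈ closure S for all x, y
    have hstep2 : ∀ (x : E) (y : F), tm x y ∈ closure (S : Set T) := by
      intro x y
      have hx : x ∈ closure (Submodule.span Aᵐᵒᵖ (Set.range u) : Set E) := by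
        rw [hu_dense.closure_eq]; trivial
      have hy : y ∈ closure (Submodule.span Bᵐᵒᵖ (Set.range v) : Set F) := by
        rw [hv_dense.closure_eq]; trivial
      exact map_mem_closure₂ (f := fun x y => tm x y) hcont hx hy hstep
    -- the set of elementary tensors is closed under ℂ-scalar multiplication
    set S₀ : Set T := {z : T | ∃ x y, tm x y = z} with hS₀
    have hS0smul : ∀ (c : ℂ), ∀ z ∈ S₀, c • z ∈ S₀ := by
      rintro c _ ⟨x, y, rfl⟩
      exact ⟨c • x, y, by rw [map_smul, LinearMap.smul_apply]⟩
    -- closure S is an additive submonoid containing S₀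
    have hmono : (AddSubmonoid.closure S₀ : Set T) ⊆ closure (S : Set T) := by
      have h1 : AddSubmonoid.closure S₀ ≤ (S.toAddSubmonoid).topologicalClosure :=
        AddSubmonoid.closure_le.mpr (by rintro _ ⟨x, y, rfl⟩; exact hstep2 x y)
      exact h1
    have hsmul_closure : ∀ (c : ℂ), ∀ z ∈ AddSubmonoid.closure S₀,
        c • z ∈ AddSubmonoid.closure S₀ := by
      intro c z hz
      induction hz using AddSubmonoid.closure_induction with
      | mem w hw => exact AddSubmonoid.subset_closure (hS0smul c w hw)
      | zero => rw [smul_zero]; exact AddSubmonoid.zero_mem _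
      | add w₁ w₂ _ _ h₁ h₂ => rw [smul_add]; exact AddSubmonoid.add_mem _ h₁ h₂
    -- step 3: the ℂ-span of elementary tensors lies in the additive closure of S₀
    have hstep3 : (Submodule.span ℂ S₀ : Set T) ⊆ (AddSubmonoid.closure S₀ : Set T) := by
      intro z hz
      induction hz using Submodule.span_induction with
      | mem z hzmem => exact AddSubmonoid.subset_closure hzmem
      | zero => exact AddSubmonoid.zero_mem _
      | add x z _ _ hx hz => exact AddSubmonoid.add_mem _ hx hz
      | smul c z _ hz => exact hsmul_closure c z hz
    -- conclude
    rw [dense_iff_closure_eq]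
    apply Set.eq_univ_of_univ_subset
    have h4 : closure ((Submodule.span ℂ S₀ : Submodule ℂ T) : Set T) ⊆
        closure (closure (S : Set T)) :=
      closure_mono (fun z hz => hmono (hstep3 hz))
    rw [closure_closure] at h4
    calc (Set.univ : Set T) = closure ((Submodule.span ℂ S₀ : Submodule ℂ T) : Set T) :=
          htm_dense.closure_eq.symm
      _ ⊆ closure (S : Set T) := h4
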